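/- Let H be a graph on at most n vertices such that for all disjoint A, B ⊆ V(H) there is an A,B-connector in H of size at least min(|A|,|B|)/n^{1/3}. If C ⊆ H is a cycle with l := |C| > 4·n^{2/3} vertices, then H contains a cycle C′ with l/2 < |C′| < l. -/

import Mathlib

open SimpleGraph

/-- A multigraph with vertex type `W` and edge type `F`: each edge has an
unordered pair of endpoints (possibly equal, giving a loop). -/
structure Multigraph (W : Type*) (F : Type*) where
  ends : F → Sym2 W

namespace Multigraph

variable {W F : Type*}

/-- Adjacency in a multigraph. -/
def Adj (M : Multigraph W F) (u v : W) : Prop :=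
  ∃ e : F, M.ends e = s(u, v)

/-- A multigraph is connected if it is nonempty and any two vertices are joined by a walk. -/
def Connected (M : Multigraph W F) : Prop :=
  Nonempty W ∧ ∀ u v : W, Relation.ReflTransGen M.Adj u v

/-- Delete the edge `e` from the multigraph `M`. -/
def deleteEdge (M : Multigraph W F) (e : F) : Multigraph W {f : F // f ≠ e} where
  ends f := M.ends f.1

/-- An edge of a (connected) multigraph is a cut-edge if deleting it disconnects
the multigraph. -/
def IsCutEdge (M : Multigraph W F) (e : F) : Prop :=
  ¬ (M.deleteEdge e).Connected

end Multigraph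

variable {V W F : Type*}

/-- `Q` is (the subgraph realizing) an `M`-subdivision inside the simple graph `G`:
there is an injective placement `b` of the branch vertices of `M`, and for each edge
`e` of `M` with ends `u e`, `v e` a path (a cycle, if `e` is a loop) of `G` joining
`b (u e)` to `b (v e)`; these paths are internally disjoint from each other and from
the branch vertices, are pairwise edge-disjoint, and their union is exactly `Q`. -/
def IsSubdivisionIn (M : Multigraph W F) (G : SimpleGraph V) (Q : G.Subgraph) : Prop :=
  ∃ (b : W → V) (u v : F → W) (P : ∀ e : F, G.Walk (b (u e)) (b (v e))),
    Function.Injective b ∧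
    (∀ e, M.ends e = s(u e, v e)) ∧
    (∀ e, ∀ h : u e = v e, ((P e).copy rfl (congrArg b h.symm)).IsCycle) ∧
    (∀ e, u e ≠ v e → (P e).IsPath) ∧
    (∀ e, ∀ x ∈ (P e).support, x ∈ Set.range b → x = b (u e) ∨ x = b (v e)) ∧
    (∀ e e', e ≠ e' → ∀ x, x ∈ (P e).support → x ∈ (P e').support → x ∈ Set.range b) ∧
    (∀ e e', e ≠ e' → ∀ a, a ∈ (P e).edges → a ∉ (P e').edges) ∧
    Q.verts = Set.range b ∪ ⋃ e, {x | x ∈ (P e).support} ∧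
    (∀ x y, Q.Adj x y ↔ ∃ e, (P e).toSubgraph.Adj x y)

/-- `Q` is a maximum `M`-subdivision among those contained in the subgraph `H` of `G`
(maximum with respect to the number of edges). -/
def IsMaxSubdivisionIn (M : Multigraph W F) (G : SimpleGraph V) (H Q : G.Subgraph) : Prop :=
  IsSubdivisionIn M G Q ∧ Q ≤ H ∧
    ∀ R : G.Subgraph, IsSubdivisionIn M G R → R ≤ H →
      R.edgeSet.ncard ≤ Q.edgeSet.ncard

/-- The family `L(M,H)` of maximum `M`-subdivisions in `H` is pairwise intersecting. -/
def PairwiseIntersectingIn (M : Multigraph W F) (G : SimpleGraph V) (H : G.Subgraph) : Prop :=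
  ∀ Q R : G.Subgraph, IsMaxSubdivisionIn M G H Q → IsMaxSubdivisionIn M G H R →
    (Q.verts ∩ R.verts).Nonempty

/-- `S` is a transversal of the family `L(M,H)` of maximum `M`-subdivisions in `H`. -/
def IsTransversalIn (M : Multigraph W F) (G : SimpleGraph V) (H : G.Subgraph)
    (S : Set V) : Prop :=
  ∀ Q : G.Subgraph, IsMaxSubdivisionIn M G H Q → (S ∩ Q.verts).Nonempty

/-- `(X, Y)` is an `H`-pretransversal: `Y ⊆ X ⊆ V(H)`, `n^{1/3}·|Y| ≤ |X|`
(where `n = |V(G)|`), and every maximum `M`-subdivision `Q` in `H` satisfies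
`Q ⊆ H − X` or `Q ∩ Y ≠ ∅`. -/
def IsPretransversal [Fintype V] (M : Multigraph W F) (G : SimpleGraph V)
    (H : G.Subgraph) (X Y : Set V) : Prop :=
  Y ⊆ X ∧ X ⊆ H.verts ∧
    (Fintype.card V : ℝ) ^ ((1 : ℝ) / 3) * (Y.ncard : ℝ) ≤ (X.ncard : ℝ) ∧
    ∀ Q : G.Subgraph, IsMaxSubdivisionIn M G H Q →
      Q ≤ H.deleteVerts X ∨ (Q.verts ∩ Y).Nonempty

/-- An `A,B`-connector of size `k` inside the subgraph `H` of `G`: `k` pairwise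
vertex-disjoint paths of `H`, each meeting `A` exactly in its first vertex and
meeting `B` exactly in its last vertex. -/
def IsConnector (G : SimpleGraph V) (H : G.Subgraph) (A B : Set V) (k : ℕ) : Prop :=
  ∃ (a : Fin k → V) (b : Fin k → V) (p : ∀ i : Fin k, G.Walk (a i) (b i)),
    (∀ i, (p i).IsPath) ∧
    (∀ i, (p i).toSubgraph ≤ H) ∧
    (∀ i, {x | x ∈ (p i).support} ∩ A = {a i}) ∧
    (∀ i, {x | x ∈ (p i).support} ∩ B = {b i}) ∧
    (∀ i j, i ≠ j → ∀ x, x ∈ (p i).support → x ∉ (p j).support)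

lemma keynum {L A Gg N : ℝ} (h1 : 4*A ≤ L + 3) (h2 : L ≤ 4*A) (h3 : L ≤ 2*Gg + 2*A + 1)
    (h4 : 4*N^2 < L) (h5 : 1 ≤ N) (hA : 0 < A) : N^4 < A*(Gg+1) := by
  have hN2ge : (1:ℝ) ≤ N ^ 2 := by nlinarith
  have hL4 : (4:ℝ) < L := by nlinarith
  nlinarith [mul_nonneg (by linarith : (0:ℝ) ≤ 4*A - L) (by linarith : (0:ℝ) ≤ 3 - (4*A - L)),
    mul_pos (by linarith : (0:ℝ) < L - 4*N^2) (by nlinarith : (0:ℝ) < L + 4*N^2),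
    mul_nonneg hA.le (by linarith : (0:ℝ) ≤ 2*Gg + 2*A + 1 - L)]


/-- Circular distance between indices `i j` on a cycle of length `l`. -/
def cdist (l i j : ℕ) : ℕ := (min (((j : ℤ) - i) % l) (((i : ℤ) - j) % l)).toNat

lemma cdist_le_natAbs {l : ℕ} (hl : 0 < l) (i j : ℕ) (m : ℤ)
    (hm : (l : ℤ) ∣ ((j : ℤ) - i - m)) : cdist l i j ≤ m.natAbs := by
  have hl' : (0 : ℤ) < l := by exact_mod_cast hl
  rcases le_or_gt 0 m with hm0 | hm0
  · have he : ((j : ℤ) - i) % l = m % l := Int.ModEq.symm (Int.modEq_iff_dvd.mpr (by ring_nf; ring_nf at hm; exact hm))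
    have h1 : ((j : ℤ) - i) % l ≤ m := by
      rw [he, Int.emod_def]
      have : 0 ≤ m / l := Int.ediv_nonneg hm0 hl'.le
      nlinarith [Int.emod_nonneg m hl'.ne']
    have hmin : (min (((j : ℤ) - i) % l) (((i : ℤ) - j) % l)) ≤ m := le_trans (min_le_left _ _) h1
    have h2' : 0 ≤ ((i : ℤ) - j) % l := Int.emod_nonneg _ hl'.ne'
    have h1' : 0 ≤ ((j : ℤ) - i) % l := Int.emod_nonneg _ hl'.ne'
    unfold cdist
    omega
  · have hm' : (l : ℤ) ∣ ((i : ℤ) - j - (-m)) := by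
      obtain ⟨t, ht⟩ := hm
      exact ⟨-t, by linarith⟩
    have he : ((i : ℤ) - j) % l = (-m) % l := Int.ModEq.symm (Int.modEq_iff_dvd.mpr (by ring_nf; ring_nf at hm'; exact hm'))
    have h1 : ((i : ℤ) - j) % l ≤ -m := by
      rw [he, Int.emod_def]
      have : 0 ≤ (-m) / l := Int.ediv_nonneg (by omega) hl'.le
      nlinarith
    have hmin : (min (((j : ℤ) - i) % l) (((i : ℤ) - j) % l)) ≤ -m := le_trans (min_le_right _ _) h1
    have h2' : 0 ≤ ((i : ℤ) - j) % l := Int.emod_nonneg _ hl'.ne'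
    have h1' : 0 ≤ ((j : ℤ) - i) % l := Int.emod_nonneg _ hl'.ne'
    unfold cdist
    omega

lemma cdist_exists {l : ℕ} (hl : 0 < l) (i j : ℕ) :
    ∃ m : ℤ, (l : ℤ) ∣ ((j : ℤ) - i - m) ∧ cdist l i j = m.natAbs := by
  have hl' : (0 : ℤ) < l := by exact_mod_cast hl
  set e1 := ((j : ℤ) - i) % l with he1
  set e2 := ((i : ℤ) - j) % l with he2
  have h1 : 0 ≤ e1 := Int.emod_nonneg _ hl'.ne'
  have h2 : 0 ≤ e2 := Int.emod_nonneg _ hl'.ne'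
  have d1 : (l : ℤ) ∣ ((j : ℤ) - i - e1) := by
    rw [he1, Int.emod_def]; exact ⟨((j : ℤ) - i) / l, by ring⟩
  have d2 : (l : ℤ) ∣ ((i : ℤ) - j - e2) := by
    rw [he2, Int.emod_def]; exact ⟨((i : ℤ) - j) / l, by ring⟩
  rcases le_total e1 e2 with h | h
  · refine ⟨e1, d1, ?_⟩
    unfold cdist
    rw [← he1, ← he2, min_eq_left h]
    omega
  · refine ⟨-e2, by obtain ⟨t, ht⟩ := d2; exact ⟨-t, by linarith⟩, ?_⟩
    unfold cdist
    rw [← he1, ← he2, min_eq_right h]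
    omega

lemma cdist_triangle {l : ℕ} (hl : 0 < l) (i j k : ℕ) :
    cdist l i k ≤ cdist l i j + cdist l j k := by
  obtain ⟨m1, hd1, he1⟩ := cdist_exists hl i j
  obtain ⟨m2, hd2, he2⟩ := cdist_exists hl j k
  have : (l : ℤ) ∣ ((k : ℤ) - i - (m1 + m2)) := by
    obtain ⟨t1, ht1⟩ := hd1
    obtain ⟨t2, ht2⟩ := hd2
    exact ⟨t1 + t2, by push_cast at *; linarith⟩
  calc cdist l i k ≤ (m1 + m2).natAbs := cdist_le_natAbs hl i k _ this
    _ ≤ m1.natAbs + m2.natAbs := Int.natAbs_add_le _ _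
    _ = cdist l i j + cdist l j k := by omega

lemma cdist_self (l i : ℕ) : cdist l i i = 0 := by
  unfold cdist
  simp

lemma cdist_eq_min {l i j : ℕ} (hij : i < j) (hj : j < l) :
    cdist l i j = min (j - i) (l - (j - i)) := by
  have h1 : ((j : ℤ) - i) % l = (j : ℤ) - i :=
    Int.emod_eq_of_lt (by omega) (by omega)
  have h2 : ((i : ℤ) - j) % l = (l : ℤ) - ((j : ℤ) - i) := by
    have e : ((i : ℤ) - j) % l = ((i : ℤ) - j + l * 1) % l := (Int.add_mul_emod_self_left ..).symm
    rw [e]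
    rw [Int.emod_eq_of_lt (by omega) (by omega)]
    ring
  unfold cdist
  rw [h1, h2]
  omega

section GallaiHelpers
open SimpleGraph Walk List
set_option linter.unusedSectionVars false
variable {V : Type*} {G : SimpleGraph V} [DecidableEq V]


lemma length_takeUntil_eq_indexOf {u v x : V} (p : G.Walk u v) (h : x ∈ p.support) :
    (p.takeUntil x h).length = p.support.idxOf x := by
  induction p with
  | nil =>
    rw [Walk.mem_support_nil_iff] at h
    subst x
    simp [Walk.takeUntil]
  | cons r p ih =>
    rename_i a b d
    rw [Walk.support_cons]
    by_cases hx : a = x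
    · subst hx
      rw [List.idxOf_cons_self]
      simp [Walk.takeUntil]
    · have h' : x ∈ p.support := by
        cases h with
        | head => exact absurd rfl hx
        | tail _ h => exact h
      rw [List.idxOf_cons_ne _ hx]
      simp only [Walk.takeUntil, hx, dif_neg, not_false_iff, Walk.length_cons]
      rw [ih h']


lemma path_edge_length_one {u v : V} (p : G.Walk u v) (hp : p.IsPath) (he : s(u, v) ∈ p.edges) :
    p.length = 1 := by
  cases p with
  | nil => simp at he
  | cons h p' =>
    rename_i b
    rw [Walk.cons_isPath_iff] at hp
    rw [Walk.edges_cons, List.mem_cons] at he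
    rcases he with he | he
    · have hne : u ≠ v := fun huv => hp.2 (huv ▸ p'.end_mem_support)
      have hbv : b = v := by
        rw [Sym2.eq_iff] at he
        rcases he with ⟨-, h2⟩ | ⟨h1, h2⟩
        · exact h2.symm
        · exact absurd h2.symm hne
      subst hbv
      rw [Walk.length_cons, (Walk.isPath_iff_eq_nil (p := p')).mp hp.1, Walk.length_nil]
    · exact absurd (Walk.fst_mem_support_of_mem_edges p' he) hp.2

lemma isCycle_append_of_paths {u v : V} (p : G.Walk u v) (q : G.Walk v u) (hne : u ≠ v)
    (hp : p.IsPath) (hq : q.IsPath) (hlen : 3 ≤ p.length + q.length)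
    (hmeet : ∀ z ∈ p.support, z ∈ q.support → z = u ∨ z = v) : (p.append q).IsCycle := by
  have hqp : q.support = v :: q.support.tail := q.support_eq_cons
  have hpp : p.support = u :: p.support.tail := p.support_eq_cons
  have hpn : p.support.Nodup := hp.support_nodup
  have hqn : q.support.Nodup := hq.support_nodup
  have hunp : u ∉ p.support.tail := by
    rw [hpp] at hpn; exact (List.nodup_cons.mp hpn).1
  have hvnq : v ∉ q.support.tail := by
    rw [hqp] at hqn; exact (List.nodup_cons.mp hqn).1
  rw [Walk.isCycle_def]
  refine ⟨?_, ?_, ?_⟩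
  · -- trail
    rw [Walk.isTrail_def, Walk.edges_append]
    refine List.Nodup.append hp.isTrail.edges_nodup hq.isTrail.edges_nodup ?_
    intro e hep heq
    induction e using Sym2.inductionOn with
    | hf a b =>
      have hap : a ∈ p.support := Walk.fst_mem_support_of_mem_edges p hep
      have hbp : b ∈ p.support := Walk.snd_mem_support_of_mem_edges p hep
      have haq : a ∈ q.support := Walk.fst_mem_support_of_mem_edges q heq
      have hbq : b ∈ q.support := Walk.snd_mem_support_of_mem_edges q heq
      have hab : a ≠ b := by
        intro hab
        have : s(a,b) ∈ G.edgeSet := Walk.edges_subset_edgeSet p hep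
        rw [hab] at this
        exact G.irrefl this
      have ha := hmeet a hap haq
      have hb := hmeet b hbp hbq
      have he' : s(a, b) = s(u, v) := by
        rcases ha with rfl | rfl <;> rcases hb with rfl | rfl <;> first
          | exact absurd rfl hab
          | rw [Sym2.eq_swap]
          | rfl
      rw [he'] at hep heq
      have l1 : p.length = 1 := path_edge_length_one p hp hep
      have l2 : q.length = 1 := path_edge_length_one q hq (by rwa [Sym2.eq_swap] at heq)
      omega
  · -- not nil
    intro hnil
    have : (p.append q).length = 0 := by rw [hnil]; rfl
    rw [Walk.length_append] at this
    omega
  · rw [Walk.tail_support_append]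
    refine List.Nodup.append ?_ ?_ ?_
    · rw [hpp] at hpn; exact (List.nodup_cons.mp hpn).2
    · rw [hqp] at hqn; exact (List.nodup_cons.mp hqn).2
    · intro z hzp hzq
      have hz1 : z ∈ p.support := by rw [hpp]; exact List.mem_cons_of_mem _ hzp
      have hz2 : z ∈ q.support := by rw [hqp]; exact List.mem_cons_of_mem _ hzq
      rcases hmeet z hz1 hz2 with rfl | rfl
      · exact hunp hzp
      · exact hvnq hzq


lemma nodup_indexOf_getElem {α : Type*} [DecidableEq α] {L : List α} (h : L.Nodup) {i : ℕ}
    (hi : i < L.length) : L.idxOf (L[i]'hi) = i := by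
  have hmem : L[i]'hi ∈ L := List.getElem_mem hi
  have hlt : L.idxOf (L[i]'hi) < L.length := List.idxOf_lt_length_iff.mpr hmem
  have h2 := List.getElem_idxOf hlt
  exact (h.getElem_inj_iff).mp h2

lemma cycle_dropLast_append {w : V} (c : G.Walk w w) :
    c.support.dropLast ++ [w] = c.support := by
  have h1 := List.dropLast_append_getLast c.support_ne_nil
  rw [c.getLast_support] at h1
  exact h1

lemma cycle_dropLast_nodup {w : V} (c : G.Walk w w) (hc : c.IsCycle) :
    c.support.dropLast.Nodup := by
  obtain ⟨T, hT⟩ : ∃ T, c.support.tail = T := ⟨_, rfl⟩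
  have hTnodup : T.Nodup := hT ▸ (c.isCycle_def.mp hc).2.2
  have hScons : c.support = w :: T := by rw [← hT]; exact c.support_eq_cons
  have hSlen : c.support.length = c.length + 1 := c.length_support
  have hl3 : 3 ≤ c.length := hc.three_le_length
  have hTlen : T.length = c.length := by
    rw [← hT, List.length_tail, hSlen]
    omega
  have hTne : T ≠ [] := by
    intro h
    rw [h] at hTlen
    simp at hTlen
    omega
  have hTlast : T.getLast hTne = w := by
    have h1 : c.support.getLast c.support_ne_nil = T.getLast hTne := by
      rw [List.getLast_congr _ _ hScons]
      exact List.getLast_cons hTne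
    rw [← h1, c.getLast_support]
  have hwdl : w ∉ T.dropLast := by
    intro hmem
    have h2 := List.dropLast_append_getLast hTne
    rw [hTlast] at h2
    have hnd : (T.dropLast ++ [w]).Nodup := by rw [h2]; exact hTnodup
    rw [List.nodup_append] at hnd
    exact hnd.2.2 w hmem w (List.mem_singleton_self w) rfl
  rw [hScons, List.dropLast_cons_of_ne_nil hTne]
  exact List.nodup_cons.mpr ⟨hwdl, (List.dropLast_sublist _).nodup hTnodup⟩
lemma getElem_eq_of_eq {α : Type*} {L : List α} {i j : ℕ} (h : i = j) (hi : i < L.length) :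
    L[i]'hi = L[j]'(h ▸ hi) := by subst h; rfl

lemma arc_package {w x y : V} (c : G.Walk w w) (hc : c.IsCycle)
    (hx : x ∈ c.support) (hy : y ∈ c.support)
    (hij : c.support.idxOf x < c.support.idxOf y) :
    ∃ (P : G.Walk x y) (Q : G.Walk y x),
      P.IsPath ∧ Q.IsPath ∧
      P.length = c.support.idxOf y - c.support.idxOf x ∧
      P.length + Q.length = c.length ∧
      (∀ z ∈ P.support, z ∈ c.support) ∧ (∀ z ∈ Q.support, z ∈ c.support) ∧
      (∀ z ∈ P.support, z ∈ Q.support → z = x ∨ z = y) ∧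
      c.support.idxOf y < c.length := by
  obtain ⟨l, hl⟩ : ∃ l, c.length = l := ⟨_, rfl⟩
  obtain ⟨i, hi⟩ : ∃ i, c.support.idxOf x = i := ⟨_, rfl⟩
  obtain ⟨j, hj⟩ : ∃ j, c.support.idxOf y = j := ⟨_, rfl⟩
  rw [hi, hj] at hij
  rw [hi, hj, hl]
  have hSlen : c.support.length = l + 1 := by rw [← hl]; exact c.length_support
  have hl3 : 3 ≤ l := hl ▸ hc.three_le_length
  have hi_lt : i < c.support.length := hi ▸ List.idxOf_lt_length_iff.mpr hx
  have hj_lt : j < c.support.length := hj ▸ List.idxOf_lt_length_iff.mpr hy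
  have hSne : c.support ≠ [] := c.support_ne_nil
  have hSlast : c.support.getLast hSne = w := c.getLast_support
  have hSl : c.support[l]'(by omega) = w := by
    rw [List.getLast_eq_getElem] at hSlast
    rw [getElem_eq_of_eq (by omega : l = c.support.length - 1)]
    exact hSlast
  obtain ⟨T, hT⟩ : ∃ T, c.support.tail = T := ⟨_, rfl⟩
  have hScons : c.support = w :: T := by rw [← hT]; exact c.support_eq_cons
  have hiw : c.support.idxOf w = 0 := by rw [hScons]; exact List.idxOf_cons_self
  have hjl : j < l := by
    by_contra hcon
    have hjeq : j = l := by omega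
    have hyval : c.support[j]'hj_lt = y :=
      (getElem_eq_of_eq hj.symm hj_lt).trans (List.getElem_idxOf (List.idxOf_lt_length_iff.mpr hy))
    have hyw : y = w := by
      rw [← hyval, getElem_eq_of_eq hjeq]; exact hSl
    rw [hyw, hiw] at hj
    omega
  have hxy : x ≠ y := fun h => by rw [h, hj] at hi; omega
  -- decompose c at y
  have hspec : (c.takeUntil y hy).append (c.dropUntil y hy) = c := c.take_spec hy
  have lty : (c.takeUntil y hy).length = j := by
    rw [length_takeUntil_eq_indexOf c hy]; exact hj
  have hSsplit : (c.takeUntil y hy).support ++ (c.dropUntil y hy).support.tail = c.support := by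
    rw [← SimpleGraph.Walk.support_append, hspec]
  have htyS : (c.takeUntil y hy).support = c.support.take (j + 1) := by
    have hpre : (c.takeUntil y hy).support <+: c.support := ⟨_, hSsplit⟩
    rw [List.prefix_iff_eq_take.mp hpre, SimpleGraph.Walk.length_support, lty]
  have hdyt : (c.dropUntil y hy).support.tail = c.support.drop (j + 1) := by
    apply List.append_cancel_left (as := c.support.take (j + 1))
    rw [List.take_append_drop, ← htyS, hSsplit]
  have hdyS : (c.dropUntil y hy).support = y :: c.support.drop (j + 1) := by
    rw [(c.dropUntil y hy).support_eq_cons, hdyt]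
  -- x lies in (takeUntil y)
  have hxval : c.support[i]'hi_lt = x :=
    (getElem_eq_of_eq hi.symm hi_lt).trans (List.getElem_idxOf (List.idxOf_lt_length_iff.mpr hx))
  have hxty : x ∈ (c.takeUntil y hy).support := by
    rw [htyS]
    have h1 : i < (c.support.take (j + 1)).length := by rw [List.length_take]; omega
    have h2 : (c.support.take (j + 1))[i]'h1 = x := by rw [List.getElem_take]; exact hxval
    rw [← h2]; exact List.getElem_mem _
  have hspec2 : ((c.takeUntil y hy).takeUntil x hxty).append ((c.takeUntil y hy).dropUntil x hxty)
      = c.takeUntil y hy := (c.takeUntil y hy).take_spec hxty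
  set PP := (c.takeUntil y hy).dropUntil x hxty with hPPdef
  set tyx := (c.takeUntil y hy).takeUntil x hxty with htyxdef
  have htySsplit : tyx.support ++ PP.support.tail = (c.takeUntil y hy).support := by
    rw [← SimpleGraph.Walk.support_append, hspec2]
  have ltyx : tyx.length = i := by
    rw [htyxdef, length_takeUntil_eq_indexOf _ hxty]
    have h1 : c.support.idxOf x = (c.takeUntil y hy).support.idxOf x := by
      rw [← hSsplit]; exact List.idxOf_append_of_mem hxty
    rw [← h1, hi]
  have lenP : PP.length = j - i := by
    have h1 := congrArg SimpleGraph.Walk.length hspec2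
    rw [SimpleGraph.Walk.length_append, ltyx, lty] at h1
    omega
  have htyxS : tyx.support = c.support.take (i + 1) := by
    have hpre : tyx.support <+: (c.takeUntil y hy).support := ⟨_, htySsplit⟩
    rw [List.prefix_iff_eq_take.mp hpre, SimpleGraph.Walk.length_support, ltyx, htyS,
      List.take_take]
    congr 1
    omega
  have hsegval : tyx.support ++ PP.support.tail = c.support.take (j + 1) := by
    rw [htySsplit, htyS]
  -- decompose c at x for the return arc
  have hspec3 := c.take_spec hx
  have ltx : (c.takeUntil x hx).length = i := by
    rw [length_takeUntil_eq_indexOf c hx]; exact hi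
  have htxS : (c.takeUntil x hx).support = c.support.take (i + 1) := by
    have hsp : (c.takeUntil x hx).support ++ (c.dropUntil x hx).support.tail = c.support := by
      rw [← SimpleGraph.Walk.support_append, hspec3]
    have hpre : (c.takeUntil x hx).support <+: c.support := ⟨_, hsp⟩
    rw [List.prefix_iff_eq_take.mp hpre, SimpleGraph.Walk.length_support, ltx]
  have htxtyx : (c.takeUntil x hx).support = tyx.support := by rw [htxS, htyxS]
  have ldy : (c.dropUntil y hy).length = l - j := by
    have h1 := congrArg SimpleGraph.Walk.length hspec
    rw [SimpleGraph.Walk.length_append, lty, hl] at h1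
    omega
  -- master nodup list
  have hTnodup : T.Nodup := hT ▸ ((c.isCycle_def).mp hc).2.2
  have hTne : T ≠ [] := by
    intro h
    have h1 := congrArg List.length hScons
    rw [hSlen, h, List.length_cons] at h1
    simp at h1
    omega
  have hwdl : w ∉ T.dropLast := by
    have hTlast : T.getLast hTne = w := by
      have h1 : c.support.getLast hSne = T.getLast hTne := by
        rw [List.getLast_congr _ _ hScons]
        exact List.getLast_cons hTne
      rw [← h1, hSlast]
    intro hmem
    have h2 := List.dropLast_append_getLast hTne
    rw [hTlast] at h2
    have hnd : (T.dropLast ++ [w]).Nodup := by rw [h2]; exact hTnodup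
    rw [List.nodup_append] at hnd
    exact hnd.2.2 w hmem w (List.mem_singleton_self w) rfl
  have hMnodup : c.support.dropLast.Nodup := by
    rw [hScons, List.dropLast_cons_of_ne_nil hTne]
    exact List.nodup_cons.mpr ⟨hwdl, (List.dropLast_sublist _).nodup hTnodup⟩
  have hDne : c.support.drop (j + 1) ≠ [] := by
    intro h
    have h1 := congrArg List.length h
    rw [List.length_drop, hSlen] at h1
    simp at h1
    omega
  have hMsplit : c.support.dropLast = (tyx.support ++ PP.support.tail)
      ++ (c.support.drop (j + 1)).dropLast := by
    rw [hsegval]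
    calc c.support.dropLast
        = (c.support.take (j + 1) ++ c.support.drop (j + 1)).dropLast := by
          rw [List.take_append_drop]
      _ = c.support.take (j + 1) ++ (c.support.drop (j + 1)).dropLast :=
          List.dropLast_append_of_ne_nil hDne
  have hbig : ((tyx.support ++ PP.support.tail) ++ (c.support.drop (j + 1)).dropLast).Nodup :=
    hMsplit ▸ hMnodup
  rw [List.append_assoc, List.nodup_append] at hbig
  obtain ⟨nd_tyx, hbig2, hdisj1⟩ := hbig
  rw [List.nodup_append] at hbig2
  obtain ⟨nd_seg, nd_Ddl, F3⟩ := hbig2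
  have F1 : tyx.support.Disjoint PP.support.tail :=
    fun a ha hb => hdisj1 a ha a (List.mem_append_left _ hb) rfl
  have F2 : tyx.support.Disjoint (c.support.drop (j + 1)).dropLast :=
    fun a ha hb => hdisj1 a ha a (List.mem_append_right _ hb) rfl
  have hwtyx : w ∈ tyx.support := tyx.start_mem_support
  have hxtyx : x ∈ tyx.support := tyx.end_mem_support
  have hPPsupp : PP.support = x :: PP.support.tail := PP.support_eq_cons
  have hyseg : y ∈ PP.support.tail := by
    have h1 : y ∈ PP.support := PP.end_mem_support
    rw [hPPsupp] at h1
    rcases List.mem_cons.mp h1 with h | h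
    · exact absurd h.symm hxy
    · exact h
  -- D splits as dropLast ++ [w]
  have hSsplit2 : c.support.dropLast ++ [w] = c.support := by
    have h1 := List.dropLast_append_getLast hSne
    rw [hSlast] at h1
    exact h1
  have hdropc : c.support.drop (j + 1) = c.support.dropLast.drop (j + 1) ++ [w] := by
    conv_lhs => rw [← hSsplit2]
    rw [List.drop_append_of_le_length]
    have h1 : c.support.dropLast.length = l := by
      rw [List.length_dropLast, hSlen]
      omega
    omega
  have hDdl : (c.support.drop (j + 1)).dropLast = c.support.dropLast.drop (j + 1) := by
    rw [hdropc, List.dropLast_append_of_ne_nil (by simp : ([w] : List V) ≠ [])]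
    simp
  have hDsplit : (c.support.drop (j + 1)).dropLast ++ [w] = c.support.drop (j + 1) := by
    rw [hDdl, ← hdropc]
  have hyw : y ≠ w := fun h => F1 hwtyx (h ▸ hyseg)
  have hwnDdl : w ∉ (c.support.drop (j + 1)).dropLast := fun h => F2 hwtyx h
  have hynD : y ∉ c.support.drop (j + 1) := by
    intro h
    rw [← hDsplit, List.mem_append] at h
    rcases h with h | h
    · exact F3 _ hyseg _ h rfl
    · exact hyw (List.mem_singleton.mp h)
  have ndD : (c.support.drop (j + 1)).Nodup := by
    rw [← hDsplit]
    exact List.nodup_append.mpr ⟨nd_Ddl, List.nodup_singleton _,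
      fun a ha b hb hab => hwnDdl (by obtain rfl := List.mem_singleton.mp hb; exact hab ▸ ha)⟩
  have hPpath : PP.IsPath := by
    apply SimpleGraph.Walk.IsPath.mk'
    rw [hPPsupp]
    exact List.nodup_cons.mpr ⟨fun h => F1 hxtyx h, nd_seg⟩
  -- the return arc Q
  set Q := (c.dropUntil y hy).append (c.takeUntil x hx) with hQdef
  have hQsupp : Q.support = (y :: c.support.drop (j + 1)) ++ tyx.support.tail := by
    rw [hQdef, SimpleGraph.Walk.support_append, hdyS, htxtyx]
  have nd_tyxt : tyx.support.tail.Nodup := nd_tyx.tail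
  have hwntail : w ∉ tyx.support.tail := by
    have h1 := tyx.support_eq_cons
    rw [h1] at nd_tyx
    exact (List.nodup_cons.mp nd_tyx).1
  have hQpath : Q.IsPath := by
    apply SimpleGraph.Walk.IsPath.mk'
    rw [hQsupp]
    refine List.nodup_append.mpr ⟨List.nodup_cons.mpr ⟨hynD, ndD⟩, nd_tyxt, ?_⟩
    intro a ha b hb hab
    subst hab
    have hatyx : a ∈ tyx.support := List.mem_of_mem_tail hb
    rcases List.mem_cons.mp ha with rfl | ha
    · exact F1 hatyx hyseg
    · rw [← hDsplit, List.mem_append] at ha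
      rcases ha with ha | ha
      · exact F2 hatyx ha
      · rw [List.mem_singleton] at ha
        subst ha
        exact hwntail hb
  have lenQ : Q.length = (l - j) + i := by
    rw [hQdef, SimpleGraph.Walk.length_append, ldy, ltx]
  refine ⟨PP, Q, hPpath, hQpath, lenP, by omega, ?_, ?_, ?_, by omega⟩
  · intro z hz
    exact (c.support_takeUntil_subset hy) (((c.takeUntil y hy).support_dropUntil_subset hxty) hz)
  · intro z hz
    rw [hQdef, SimpleGraph.Walk.mem_support_append_iff] at hz
    rcases hz with hz | hz
    · exact (c.support_dropUntil_subset hy) hz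
    · exact (c.support_takeUntil_subset hx) hz
  · intro z hzP hzQ
    rw [hPPsupp] at hzP
    rcases List.mem_cons.mp hzP with rfl | hzseg
    · exact Or.inl rfl
    rw [hQsupp, List.mem_append] at hzQ
    rcases hzQ with hzQ | hzQ
    · rcases List.mem_cons.mp hzQ with rfl | hzD
      · exact Or.inr rfl
      · exfalso
        rw [← hDsplit, List.mem_append] at hzD
        rcases hzD with h | h
        · exact F3 _ hzseg _ h rfl
        · rw [List.mem_singleton] at h
          subst h
          exact F1 hwtyx hzseg
    · exact absurd hzseg (fun h => F1 (List.mem_of_mem_tail hzQ) h)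
lemma key_base {w x y : V} (c : G.Walk w w) (hc : c.IsCycle) (P : G.Walk x y)
    (hP : P.IsPath) (hx : x ∈ c.support) (hy : y ∈ c.support)
    (hij : c.support.idxOf x < c.support.idxOf y)
    (hlt : P.length < cdist c.length (c.support.idxOf x) (c.support.idxOf y))
    (hint : ∀ z ∈ P.support, z ∈ c.support → z = x ∨ z = y) :
    ∃ (w' : V) (c' : G.Walk w' w'), c'.IsCycle ∧
      c.length < 2 * c'.length ∧ c'.length < c.length := by
  obtain ⟨PA, QA, hPA, hQA, hlenA, hsum, hsubA, hsubB, hmeetAB, hjl⟩ := arc_package c hc hx hy hij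
  have hl3 : 3 ≤ c.length := hc.three_le_length
  have hxy : x ≠ y := fun h => by rw [h] at hij; omega
  have hcd := cdist_eq_min hij hjl
  have hq1 : 1 ≤ P.length := by
    rcases Nat.eq_zero_or_pos P.length with h | h
    · exact absurd (SimpleGraph.Walk.eq_of_length_eq_zero h) hxy
    · exact h
  have hcdle1 : cdist c.length (c.support.idxOf x) (c.support.idxOf y)
      ≤ c.support.idxOf y - c.support.idxOf x := by
    rw [hcd]; exact min_le_left _ _
  have hcdle2 : cdist c.length (c.support.idxOf x) (c.support.idxOf y)
      ≤ c.length - (c.support.idxOf y - c.support.idxOf x) := by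
    rw [hcd]; exact min_le_right _ _
  rcases le_or_gt PA.length QA.length with hcase | hcase
  · refine ⟨x, P.append QA, ?_, ?_, ?_⟩
    · refine isCycle_append_of_paths P QA hxy hP hQA (by omega) ?_
      intro z hzP hzQ
      exact hint z hzP (hsubB z hzQ)
    · rw [SimpleGraph.Walk.length_append]
      omega
    · rw [SimpleGraph.Walk.length_append]
      omega
  · refine ⟨y, P.reverse.append PA, ?_, ?_, ?_⟩
    · refine isCycle_append_of_paths P.reverse PA hxy.symm hP.reverse hPA
        (by rw [SimpleGraph.Walk.length_reverse]; omega) ?_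
      intro z hzP hzQ
      rw [SimpleGraph.Walk.support_reverse, List.mem_reverse] at hzP
      rcases hint z hzP (hsubA z hzQ) with h | h
      · exact Or.inr h
      · exact Or.inl h
    · rw [SimpleGraph.Walk.length_append, SimpleGraph.Walk.length_reverse]
      omega
    · rw [SimpleGraph.Walk.length_append, SimpleGraph.Walk.length_reverse]
      omega

lemma key_lemma {w : V} (c : G.Walk w w) (hc : c.IsCycle) :
    ∀ (q : ℕ) {x y : V} (P : G.Walk x y), P.length = q → P.IsPath →
      x ∈ c.support → y ∈ c.support →
      P.length < cdist c.length (c.support.idxOf x) (c.support.idxOf y) →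
      ∃ (w' : V) (c' : G.Walk w' w'), c'.IsCycle ∧
        c.length < 2 * c'.length ∧ c'.length < c.length := by
  have hl0 : 0 < c.length := by have := hc.three_le_length; omega
  intro q
  induction q using Nat.strong_induction_on with
  | _ q IH =>
  intro x y P hPq hP hx hy hlt
  by_cases hint : ∀ z ∈ P.support, z ∈ c.support → z = x ∨ z = y
  · rcases lt_trichotomy (c.support.idxOf x) (c.support.idxOf y) with h | h | h
    · exact key_base c hc P hP hx hy h hlt hint
    · exfalso
      rw [h, cdist_self] at hlt
      omega
    · refine key_base c hc P.reverse hP.reverse hy hx h ?_ ?_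
      · rw [SimpleGraph.Walk.length_reverse]
        calc P.length < cdist c.length (c.support.idxOf x) (c.support.idxOf y) := hlt
          _ = cdist c.length (c.support.idxOf y) (c.support.idxOf x) := by
              unfold cdist; rw [min_comm]
      · intro z hz hzc
        rw [SimpleGraph.Walk.support_reverse, List.mem_reverse] at hz
        exact (hint z hz hzc).symm
  · push_neg at hint
    obtain ⟨z, hzP, hzc, hzx, hzy⟩ := hint
    have hspec := P.take_spec hzP
    have hsum : (P.takeUntil z hzP).length + (P.dropUntil z hzP).length = P.length := by
      have := congrArg SimpleGraph.Walk.length hspec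
      rwa [SimpleGraph.Walk.length_append] at this
    have h1 : 1 ≤ (P.takeUntil z hzP).length := by
      rcases Nat.eq_zero_or_pos (P.takeUntil z hzP).length with h | h
      · exact absurd (SimpleGraph.Walk.eq_of_length_eq_zero h).symm hzx
      · exact h
    have h2 : 1 ≤ (P.dropUntil z hzP).length := by
      rcases Nat.eq_zero_or_pos (P.dropUntil z hzP).length with h | h
      · exact absurd (SimpleGraph.Walk.eq_of_length_eq_zero h) hzy
      · exact h
    have htri := cdist_triangle hl0 (c.support.idxOf x) (c.support.idxOf z)
      (c.support.idxOf y)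
    rcases lt_or_ge (P.takeUntil z hzP).length
        (cdist c.length (c.support.idxOf x) (c.support.idxOf z)) with hc1 | hc1
    · exact IH _ (by omega) _ rfl (hP.takeUntil hzP) hx hzc hc1
    · have hc2 : (P.dropUntil z hzP).length <
          cdist c.length (c.support.idxOf z) (c.support.idxOf y) := by omega
      exact IH _ (by omega) _ rfl (hP.dropUntil hzP) hzc hy hc2

end GallaiHelpers

/-- Suppose `H` has at most `n` vertices and for all disjoint
`A, B ⊆ V(H)` there is an `A,B`-connector in `H` of size at least
`min(|A|,|B|)/n^{1/3}`. If `C ⊆ H` is a cycle with `l := |C| > 4·n^{2/3}` vertices,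
then `H` contains a cycle `C'` with `l/2 < |C'| < l`. -/
theorem gallai_stmt10 {V : Type*} [Fintype V] (n : ℕ) (H : SimpleGraph V)
    (hcard : Fintype.card V ≤ n)
    (hconn : ∀ A B : Set V, Disjoint A B → ∃ k : ℕ, IsConnector H ⊤ A B k ∧
      (min A.ncard B.ncard : ℝ) / (n : ℝ) ^ ((1 : ℝ) / 3) ≤ (k : ℝ))
    {w : V} (c : H.Walk w w) (hc : c.IsCycle)
    (hlen : 4 * (n : ℝ) ^ ((2 : ℝ) / 3) < (c.length : ℝ)) :
    ∃ (w' : V) (c' : H.Walk w' w'), c'.IsCycle ∧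
      c.length < 2 * c'.length ∧ c'.length < c.length := by
  classical
  -- basic numerology
  obtain ⟨N, hNdef⟩ : ∃ N : ℝ, (n : ℝ) ^ ((1 : ℝ) / 3) = N := ⟨_, rfl⟩
  rw [hNdef] at hconn
  have hn0 : (0 : ℝ) ≤ (n : ℝ) := Nat.cast_nonneg n
  have hN0 : 0 ≤ N := hNdef ▸ Real.rpow_nonneg hn0 _
  have hN3 : N ^ 3 = (n : ℝ) := by
    rw [← hNdef, ← Real.rpow_natCast ((n : ℝ) ^ ((1:ℝ)/3)) 3, ← Real.rpow_mul hn0]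
    norm_num
  have hN2 : (n : ℝ) ^ ((2 : ℝ) / 3) = N ^ 2 := by
    rw [← hNdef, ← Real.rpow_natCast ((n : ℝ) ^ ((1:ℝ)/3)) 2, ← Real.rpow_mul hn0]
    norm_num
  have hl3 : 3 ≤ c.length := hc.three_le_length
  have hln : c.length ≤ n := by
    have h1 : c.support.tail.Nodup := (c.isCycle_def.mp hc).2.2
    have h2 : c.support.tail.length ≤ Fintype.card V := h1.length_le_card
    have h3 : c.support.tail.length = c.length := by
      have := c.length_support
      have h4 : c.support.tail.length = c.support.length - 1 := by
        rw [List.length_tail]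
      omega
    omega
  rw [hN2] at hlen
  have hn1 : 1 ≤ n := by
    have : 0 < Fintype.card V := Fintype.card_pos_iff.mpr ⟨w⟩
    omega
  have hN1 : 1 ≤ N := by
    rw [← hNdef]
    calc (1:ℝ) = (1:ℝ) ^ ((1:ℝ)/3) := (Real.one_rpow _).symm
      _ ≤ (n:ℝ) ^ ((1:ℝ)/3) :=
          Real.rpow_le_rpow (by norm_num) (by exact_mod_cast hn1) (by norm_num)
  -- integer parameters
  obtain ⟨a, ha⟩ : ∃ a, (c.length + 3) / 4 = a := ⟨_, rfl⟩
  obtain ⟨g, hg⟩ : ∃ g, (c.length - 2 * a) / 2 = g := ⟨_, rfl⟩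
  have ha1 : 1 ≤ a := by omega
  have h2a : 2 * a ≤ c.length := by omega
  have hsal : a + g + a ≤ c.length := by omega
  -- the vertex-at-index function
  set vAt : ℕ → V := fun i => c.support.getD i w with hvAt
  have hSlen : c.support.length = c.length + 1 := c.length_support
  have hmem : ∀ i, i < c.length + 1 → vAt i ∈ c.support := by
    intro i hi
    rw [hvAt]
    simp only
    rw [List.getD_eq_getElem c.support w (by omega)]
    exact List.getElem_mem _
  have hpos : ∀ i, i < c.length → c.support.idxOf (vAt i) = i := by
    intro i hi
    have hidl : i < c.support.dropLast.length := by
      rw [List.length_dropLast, hSlen]; omega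
    have h1 : vAt i = c.support.dropLast[i]'hidl := by
      rw [hvAt]
      simp only
      rw [List.getD_eq_getElem c.support w (by omega), List.getElem_dropLast]
    have h2 : List.idxOf (c.support.dropLast[i]'hidl) (c.support.dropLast ++ [w]) = i := by
      rw [List.idxOf_append_of_mem (List.getElem_mem hidl)]
      exact nodup_indexOf_getElem (cycle_dropLast_nodup c hc) hidl
    rw [cycle_dropLast_append c] at h2
    rw [h1]
    exact h2
  -- the sets A and B
  set AF : Finset V := (Finset.range a).image (fun i => vAt i) with hAF
  set BF : Finset V := (Finset.range a).image (fun i => vAt (a + g + i)) with hBF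
  have hAcard : AF.card = a := by
    rw [hAF, Finset.card_image_of_injOn, Finset.card_range]
    intro i hi j hj hij
    rw [Finset.mem_coe, Finset.mem_range] at hi hj
    have h1 := hpos i (by omega)
    have h2 := hpos j (by omega)
    have hij' : vAt i = vAt j := hij
    rw [hij'] at h1
    omega
  have hBcard : BF.card = a := by
    rw [hBF, Finset.card_image_of_injOn, Finset.card_range]
    intro i hi j hj hij
    rw [Finset.mem_coe, Finset.mem_range] at hi hj
    have h1 := hpos (a + g + i) (by omega)
    have h2 := hpos (a + g + j) (by omega)
    have hij' : vAt (a + g + i) = vAt (a + g + j) := hij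
    rw [hij'] at h1
    omega
  have hdisjAB : Disjoint (↑AF : Set V) (↑BF : Set V) := by
    rw [Set.disjoint_left]
    intro z hzA hzB
    rw [hAF, Finset.coe_image, Set.mem_image] at hzA
    rw [hBF, Finset.coe_image, Set.mem_image] at hzB
    obtain ⟨i, hi, hieq⟩ := hzA
    obtain ⟨j, hj, hjeq⟩ := hzB
    rw [Finset.mem_coe, Finset.mem_range] at hi hj
    have h1 := hpos i (by omega)
    have h2 := hpos (a + g + j) (by omega)
    rw [hieq] at h1
    rw [hjeq] at h2
    omega
  obtain ⟨k, hCon, hk⟩ := hconn (↑AF) (↑BF) hdisjAB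
  obtain ⟨af, bf, p, hpath, hsub, hA, hB, hdisjp⟩ := hCon
  rw [Set.ncard_coe_finset, Set.ncard_coe_finset, hAcard, hBcard, min_self] at hk
  have hNpos : (0:ℝ) < N := lt_of_lt_of_le one_pos hN1
  have hk1 : 1 ≤ k := by
    by_contra hcon
    have hk0 : k = 0 := by omega
    rw [hk0] at hk
    have : (0:ℝ) < (a:ℝ) / N := div_pos (by exact_mod_cast ha1) hNpos
    rw [Nat.cast_zero] at hk
    linarith
  -- counting: pick the shortest path of the connector
  have hne : (Finset.univ : Finset (Fin k)).Nonempty := ⟨⟨0, by omega⟩, Finset.mem_univ _⟩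
  obtain ⟨i0, -, hmin⟩ := Finset.exists_min_image Finset.univ
    (fun i2 => (p i2).support.toFinset.card) hne
  have hcard_eq : ∀ i2 : Fin k, (p i2).support.toFinset.card = (p i2).length + 1 := by
    intro i2
    rw [List.toFinset_card_of_nodup (hpath i2).support_nodup, SimpleGraph.Walk.length_support]
  have hdisjF : ∀ i2 ∈ (Finset.univ : Finset (Fin k)), ∀ j2 ∈ (Finset.univ : Finset (Fin k)),
      i2 ≠ j2 → Disjoint ((p i2).support.toFinset) ((p j2).support.toFinset) := by
    intro i2 _ j2 _ hij
    rw [Finset.disjoint_left]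
    intro z hz1 hz2
    rw [List.mem_toFinset] at hz1 hz2
    exact hdisjp i2 j2 hij z hz1 hz2
  have hsum_le : ∑ i2 : Fin k, (p i2).support.toFinset.card ≤ Fintype.card V := by
    rw [← Finset.card_biUnion hdisjF]
    exact Finset.card_le_card (Finset.subset_univ _) |>.trans (le_of_eq (Finset.card_univ))
  have hkmin : k * (p i0).support.toFinset.card ≤ Fintype.card V := by
    calc k * (p i0).support.toFinset.card
        = (Finset.univ : Finset (Fin k)).card • (p i0).support.toFinset.card := by
          rw [Finset.card_univ, Fintype.card_fin, smul_eq_mul]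
      _ ≤ ∑ i2 : Fin k, (p i2).support.toFinset.card :=
          Finset.card_nsmul_le_sum _ _ _ (fun i2 _ => hmin i2 (Finset.mem_univ _))
      _ ≤ Fintype.card V := hsum_le
  -- endpoints of the chosen path
  have hxA : af i0 ∈ (↑AF : Set V) := by
    have h1 : af i0 ∈ ({af i0} : Set V) := rfl
    rw [← hA i0] at h1
    exact h1.2
  have hyB : bf i0 ∈ (↑BF : Set V) := by
    have h1 : bf i0 ∈ ({bf i0} : Set V) := rfl
    rw [← hB i0] at h1
    exact h1.2
  rw [hAF, Finset.coe_image, Set.mem_image] at hxA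
  rw [hBF, Finset.coe_image, Set.mem_image] at hyB
  obtain ⟨ix, hix, hxeq⟩ := hxA
  obtain ⟨jy0, hjy0, hyeq⟩ := hyB
  rw [Finset.mem_coe, Finset.mem_range] at hix hjy0
  have hxS : af i0 ∈ c.support := hxeq ▸ hmem ix (by omega)
  have hyS : bf i0 ∈ c.support := hyeq ▸ hmem (a + g + jy0) (by omega)
  have hposx : c.support.idxOf (af i0) = ix := by rw [← hxeq]; exact hpos ix (by omega)
  have hposy : c.support.idxOf (bf i0) = a + g + jy0 := by
    rw [← hyeq]; exact hpos (a + g + jy0) (by omega)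
  -- distance lower bound
  have hcd : cdist c.length ix (a + g + jy0) = min ((a + g + jy0) - ix)
      (c.length - ((a + g + jy0) - ix)) := cdist_eq_min (by omega) (by omega)
  have hcdge : g + 1 ≤ cdist c.length ix (a + g + jy0) := by
    rw [hcd]
    omega
  -- length upper bound via the counting argument
  set m := (p i0).support.toFinset.card with hmdef
  have hm1 : 1 ≤ m := by
    rw [hmdef, hcard_eq]; omega
  have hkm : (k : ℝ) * (m : ℝ) ≤ (N : ℝ) ^ 3 := by
    rw [hN3]
    calc (k:ℝ) * (m:ℝ) = ((k * m : ℕ) : ℝ) := by push_cast; ring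
      _ ≤ ((Fintype.card V : ℕ) : ℝ) := by exact_mod_cast hkmin
      _ ≤ (n:ℝ) := by exact_mod_cast hcard
  have hmlt : (m : ℝ) < (g : ℝ) + 1 := by
    have hapos : (0:ℝ) < (a:ℝ) := by exact_mod_cast ha1
    have hkpos : (0:ℝ) < (k:ℝ) := by exact_mod_cast hk1
    -- m ≤ N^3/k ≤ N^4/a
    have h1 : (m:ℝ) ≤ N^3 / k := by
      rw [le_div_iff₀ hkpos]
      linarith [hkm]
    have h2 : N^3 / k ≤ N^3 / ((a:ℝ)/N) := by
      apply div_le_div_of_nonneg_left (le_of_lt (pow_pos hNpos 3)) (div_pos hapos hNpos) hk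
    have h3 : N^3 / ((a:ℝ)/N) = N^4 / a := by
      field_simp
    -- the key numeric inequality : N^4 < a * (g+1)
    have hL : (4:ℝ) * (a:ℝ) ≤ (c.length : ℝ) + 3 := by exact_mod_cast (by omega : 4 * a ≤ c.length + 3)
    have hL2 : (c.length : ℝ) ≤ 4 * (a:ℝ) := by exact_mod_cast (by omega : c.length ≤ 4 * a)
    have hL3 : (c.length : ℝ) ≤ 2*(g:ℝ) + 2*(a:ℝ) + 1 := by
      exact_mod_cast (by omega : c.length ≤ 2*g + 2*a + 1)
    have hkey : N^4 < (a:ℝ) * ((g:ℝ) + 1) := keynum hL hL2 hL3 hlen hN1 hapos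
    calc (m:ℝ) ≤ N^3 / k := h1
      _ ≤ N^3 / ((a:ℝ)/N) := h2
      _ = N^4 / a := h3
      _ < (g:ℝ) + 1 := by rw [div_lt_iff₀ hapos, mul_comm]; exact hkey
  have hmg : m ≤ g := by
    have : (m:ℝ) < ((g+1 : ℕ):ℝ) := by push_cast; linarith
    have := Nat.cast_lt.mp this
    omega
  -- apply the key lemma
  have hlenlt : (p i0).length < cdist c.length (c.support.idxOf (af i0))
      (c.support.idxOf (bf i0)) := by
    rw [hposx, hposy]
    have : (p i0).length + 1 = m := (hcard_eq i0).symm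
    omega
  exact key_lemma c hc (p i0).length (p i0) rfl (hpath i0) hxS hyS hlenlt
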